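/- Let z : ℕ → ℂ be a sequence with z i ≠ 0 for every i. Then the infinite product ∏ z_i converges unconditionally (i.e., the net of finite partial products over finite subsets of ℕ converges, as in Mathlib's Multipliable) to a nonzero limit if and only if ∑_{i∈ℕ} |1 − z_i| < ∞ (i.e., the function i ↦ ‖1 − z i‖ is Summable). -/

import Mathlib

open Complex Finset Filter Topology

private lemma re_pos_of_close (w : ℂ) (h : ‖w - 1‖ ≤ 1/2) : 0 < w.re := by
  have h1 : |(w - 1).re| ≤ ‖w - 1‖ := Complex.abs_re_le_norm (w - 1)
  simp only [Complex.sub_re, Complex.one_re] at h1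
  have := abs_le.mp (h1.trans h)
  linarith [this.1]

private lemma sum_log_eq_log_prod (z : ℕ → ℂ) (hz : ∀ i, z i ≠ 0) (K : Finset ℕ)
    (h : ∀ K' ⊆ K, ‖(∏ i ∈ K', z i) - 1‖ ≤ 1/2) :
    ∑ i ∈ K, Complex.log (z i) = Complex.log (∏ i ∈ K, z i) := by
  induction K using Finset.induction with
  | empty => simp
  | insert a K ha ih =>
    rw [Finset.prod_insert ha, Finset.sum_insert ha,
      ih (fun K' hK' => h K' (hK'.trans (Finset.subset_insert a K)))]
    have hPne : (∏ i ∈ K, z i) ≠ 0 := Finset.prod_ne_zero_iff.mpr (fun i _ => hz i)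
    have hza : ‖z a - 1‖ ≤ 1/2 := by
      have := h {a} (by simp [Finset.singleton_subset_iff])
      simpa using this
    have hP : ‖(∏ i ∈ K, z i) - 1‖ ≤ 1/2 := h K (Finset.subset_insert a K)
    have harg1 : |Complex.arg (z a)| < Real.pi / 2 :=
      Complex.abs_arg_lt_pi_div_two_iff.mpr (Or.inl (re_pos_of_close _ hza))
    have harg2 : |Complex.arg (∏ i ∈ K, z i)| < Real.pi / 2 :=
      Complex.abs_arg_lt_pi_div_two_iff.mpr (Or.inl (re_pos_of_close _ hP))
    have hmem : Complex.arg (z a) + Complex.arg (∏ i ∈ K, z i) ∈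
        Set.Ioc (-Real.pi) Real.pi := by
      obtain ⟨h1, h2⟩ := abs_lt.mp harg1
      obtain ⟨h3, h4⟩ := abs_lt.mp harg2
      constructor <;> [linarith; linarith]
    exact (Complex.log_mul (hz a) hPne hmem).symm

/-- Cauchy-type criterion extracted from `HasProd` to a nonzero limit. -/
private lemma prod_vanishing (z : ℕ → ℂ) {p : ℂ} (hp : p ≠ 0) (h : HasProd z p) :
    ∀ η > (0:ℝ), ∃ s₀ : Finset ℕ, ∀ t, Disjoint t s₀ → ‖(∏ i ∈ t, z i) - 1‖ < η := by
  intro η hη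
  have hpn : 0 < ‖p‖ := norm_pos_iff.mpr hp
  set δ : ℝ := min (η * ‖p‖ / 4) (‖p‖ / 2) with hδdef
  have hδ : 0 < δ := lt_min (by positivity) (by positivity)
  have hT : ∀ᶠ s in atTop, dist (∏ i ∈ s, z i) p < δ :=
    Metric.tendsto_nhds.mp h δ hδ
  obtain ⟨s₀, hs₀⟩ := eventually_atTop.mp hT
  refine ⟨s₀, fun t ht => ?_⟩
  have hA : dist (∏ i ∈ s₀, z i) p < δ := hs₀ s₀ le_rfl
  have hAB : dist (∏ i ∈ s₀ ∪ t, z i) p < δ := hs₀ _ Finset.subset_union_left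
  rw [Finset.prod_union ht.symm] at hAB
  set A := ∏ i ∈ s₀, z i with hAdef
  set B := ∏ i ∈ t, z i with hBdef
  have hAnorm : ‖p‖ / 2 ≤ ‖A‖ := by
    have h1 : ‖p‖ - ‖A‖ ≤ ‖p - A‖ := norm_sub_norm_le p A
    have h2 : ‖p - A‖ < δ := by rwa [dist_comm, dist_eq_norm] at hA
    have h3 : δ ≤ ‖p‖ / 2 := min_le_right _ _
    linarith
  have hApos : 0 < ‖A‖ := lt_of_lt_of_le (by positivity) hAnorm
  have key : ‖A * B - A‖ < 2 * δ := by
    have h1 : ‖A * B - p‖ < δ := by rwa [dist_eq_norm] at hAB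
    have h2 : ‖p - A‖ < δ := by rwa [dist_comm, dist_eq_norm] at hA
    calc ‖A * B - A‖ ≤ ‖A * B - p‖ + ‖p - A‖ := norm_sub_le_norm_sub_add_norm_sub _ _ _
    _ < 2 * δ := by linarith
  have hfac : ‖A * B - A‖ = ‖A‖ * ‖B - 1‖ := by
    rw [← norm_mul, mul_sub, mul_one]
  rw [hfac] at key
  have hδη : 2 * δ ≤ η * ‖p‖ / 2 := by
    have := min_le_left (η * ‖p‖ / 4) (‖p‖ / 2)
    rw [hδdef]; linarith
  have : ‖A‖ * ‖B - 1‖ < η * ‖A‖ := by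
    have h4 : η * ‖p‖ / 2 ≤ η * ‖A‖ := by
      rw [div_le_iff₀ (by norm_num : (0:ℝ) < 2)] at *
      nlinarith
    linarith
  exact lt_of_mul_lt_mul_left (by linarith [this]) (le_of_lt hApos) |>.trans_le le_rfl

/-- **Convergence of infinite products of complex numbers.**
For a sequence `z : ℕ → ℂ` of nonzero complex numbers, the infinite product
`∏ᵢ z i` converges unconditionally (in the sense of `HasProd`) to a nonzero
limit if and only if `∑ᵢ ‖1 - z i‖ < ∞`. -/
theorem infinite_product_converges_iff_summable (z : ℕ → ℂ) (hz : ∀ i, z i ≠ 0) :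
    (∃ p : ℂ, p ≠ 0 ∧ HasProd z p) ↔ Summable (fun i => ‖1 - z i‖) := by
  constructor
  · rintro ⟨p, hp, h⟩
    -- Step 1: the logs are summable
    have hlog : Summable (fun i => Complex.log (z i)) := by
      rw [summable_iff_vanishing_norm]
      intro ε hε
      set η : ℝ := min (1/2) (ε/2) with hηdef
      have hη : 0 < η := lt_min (by norm_num) (by positivity)
      obtain ⟨s₀, hs₀⟩ := prod_vanishing z hp h η hη
      refine ⟨s₀, fun t ht => ?_⟩
      have hsub : ∀ K' ⊆ t, ‖(∏ i ∈ K', z i) - 1‖ ≤ 1/2 := by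
        intro K' hK'
        have := hs₀ K' (Finset.disjoint_of_subset_left hK' ht)
        exact this.le.trans (min_le_left _ _)
      rw [sum_log_eq_log_prod z hz t hsub]
      have h1 : ‖(∏ i ∈ t, z i) - 1‖ < η := hs₀ t ht
      have h2 : ‖(∏ i ∈ t, z i) - 1‖ ≤ 1/2 := hsub t le_rfl
      have h3 : ‖Complex.log (1 + ((∏ i ∈ t, z i) - 1))‖ ≤ (3/2) * ‖(∏ i ∈ t, z i) - 1‖ :=
        Complex.norm_log_one_add_half_le_self h2
      rw [add_sub_cancel] at h3
      have h4 : η ≤ ε / 2 := min_le_right _ _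
      calc ‖Complex.log (∏ i ∈ t, z i)‖ ≤ (3/2) * ‖(∏ i ∈ t, z i) - 1‖ := h3
        _ < (3/2) * η := by nlinarith
        _ ≤ ε := by nlinarith
    -- Step 2: norms of logs are summable (finite dimension)
    have hnorm : Summable (fun i => ‖Complex.log (z i)‖) := summable_norm_iff.mpr hlog
    -- Step 3: compare ‖1 - z i‖ with 2 * ‖log z i‖ eventually
    have hev : ∀ᶠ i in cofinite, ‖(fun i => ‖1 - z i‖) i‖ ≤ 2 * ‖Complex.log (z i)‖ := by
      have htend : Tendsto (fun i => Complex.log (z i)) cofinite (𝓝 0) :=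
        hlog.tendsto_cofinite_zero
      have hsmall : ∀ᶠ i in cofinite, ‖Complex.log (z i)‖ ≤ 1 := by
        filter_upwards [Metric.tendsto_nhds.mp htend 1 one_pos] with i hi
        rw [dist_zero_right] at hi
        exact hi.le
      filter_upwards [hsmall] with i hi
      have habs : ‖Complex.exp (Complex.log (z i)) - 1‖
          ≤ 2 * ‖Complex.log (z i)‖ :=
        Complex.norm_exp_sub_one_le hi
      rw [Complex.exp_log (hz i)] at habs
      have : ‖z i - 1‖ ≤ 2 * ‖Complex.log (z i)‖ := habs
      rw [Real.norm_eq_abs, _root_.abs_of_nonneg (norm_nonneg _), norm_sub_rev]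
      exact this
    exact Summable.of_norm_bounded_eventually (hnorm.mul_left 2) hev
  · intro hsum
    have hsmall : ∀ᶠ i in cofinite, ‖1 - z i‖ ≤ 1/2 := by
      have htend : Tendsto (fun i => ‖1 - z i‖) cofinite (𝓝 0) :=
        hsum.tendsto_cofinite_zero
      filter_upwards [Metric.tendsto_nhds.mp htend (1/2) (by norm_num)] with i hi
      rw [Real.dist_eq, sub_zero, _root_.abs_of_nonneg (norm_nonneg _)] at hi
      exact hi.le
    have hlog : Summable (fun i => Complex.log (z i)) := by
      apply Summable.of_norm_bounded_eventually (g := fun i => (3/2) * ‖1 - z i‖)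
        (hsum.mul_left (3/2))
      filter_upwards [hsmall] with i hi
      have h3 : ‖Complex.log (1 + (z i - 1))‖ ≤ (3/2) * ‖z i - 1‖ :=
        Complex.norm_log_one_add_half_le_self (by rwa [norm_sub_rev])
      rw [add_sub_cancel] at h3
      rw [norm_sub_rev (1:ℂ)]
      exact h3
    obtain ⟨S, hS⟩ := hlog
    refine ⟨Complex.exp S, Complex.exp_ne_zero S, ?_⟩
    have := hS.cexp
    have heq : (Complex.exp ∘ fun i => Complex.log (z i)) = z := by
      funext i
      exact Complex.exp_log (hz i)
    rwa [heq] at this
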